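/- Correctness of the Landau–Vishkin frontier recurrence: fix t ≥ 1 and an integer diagonal i with |i| ≤ t and −m ≤ i ≤ n. Consider the candidate values c₁ = f(t−1, i+1) (applicable when |i+1| ≤ t−1 and i+1 ≤ n), c₂ = f(t−1, i−1) + 1 (applicable when |i−1| ≤ t−1 and i−1 ≥ −m), and c₃ = f(t−1, i) + 1 (applicable when |i| ≤ t−1). At least one candidate is applicable; let g = min( min(n, m+i), max of the applicable candidates ). Then S_t(i) is nonempty and f(t,i) = g + lcp(A.drop g, B.drop (g−i)). That is, the frontier of edit distance t on diagonal i is obtained by taking the farthest cell reachable in one unit-cost step from the three neighboring frontiers of distance t−1 and then sliding along the longest common prefix of the remaining suffixes. -/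

import Mathlib

/-- Costs for Levenshtein edit distance (removed from Mathlib; restored with its old definition). -/
structure Levenshtein.Cost (α β δ : Type*) where
  delete : α → δ
  insert : β → δ
  substitute : α → β → δ

/-- The default unit costs (as in the old Mathlib). -/
def Levenshtein.defaultCost {α : Type*} [DecidableEq α] : Levenshtein.Cost α α ℕ where
  delete _ := 1
  insert _ := 1
  substitute a b := if a = b then 0 else 1

/-- Step of the Levenshtein dynamic program (as in the old Mathlib). -/
def Levenshtein.impl {α β δ : Type*} [AddZeroClass δ] [Min δ] (C : Levenshtein.Cost α β δ)
    (xs : List α) (y : β) (d : {r : List δ // 0 < r.length}) : {r : List δ // 0 < r.length} :=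
  let ⟨ds, w⟩ := d
  xs.zip (ds.zip ds.tail) |>.foldr
    (init := ⟨[C.insert y + ds.getLast (List.length_pos_iff.mp w)], by simp⟩)
    (fun ⟨x, d₀, d₁⟩ ⟨r, w⟩ =>
      ⟨min (C.delete x + r[0]'w) (min (C.insert y + d₀) (C.substitute x y + d₁)) :: r, by simp⟩)

/-- Edit distances of all suffixes of `xs` to `ys` (as in the old Mathlib). -/
def suffixLevenshtein {α β δ : Type*} [AddZeroClass δ] [Min δ] (C : Levenshtein.Cost α β δ)
    (xs : List α) (ys : List β) : {r : List δ // 0 < r.length} :=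
  ys.foldr
    (Levenshtein.impl C xs)
    (xs.foldr (init := ⟨[0], by simp⟩) (fun a ⟨r, w⟩ => ⟨(C.delete a + r[0]'w) :: r, by simp⟩))

/-- The Levenshtein edit distance (as in the old Mathlib). -/
def levenshtein {α β δ : Type*} [AddZeroClass δ] [Min δ] (C : Levenshtein.Cost α β δ)
    (xs : List α) (ys : List β) : δ :=
  let ⟨r, w⟩ := suffixLevenshtein C xs ys
  r[0]'w

/-- The unit-cost Levenshtein edit distance. -/
def editDist {α : Type*} [DecidableEq α] (A B : List α) : ℕ :=
  levenshtein Levenshtein.defaultCost A B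

/-- The longest-common-prefix length: the largest `l ≤ min(|A|, |B|)`
with `A.take l = B.take l`. -/
def lcp {α : Type*} [DecidableEq α] (A B : List α) : ℕ :=
  Nat.findGreatest (fun l => A.take l = B.take l) (min A.length B.length)

/-- `S_t(i)`: the set of points `x` in the domain of diagonal `i` whose prefix edit distance
`d_i(x) = d(A.take x, B.take (x - i))` is at most `t`. -/
def diagSet {α : Type*} [DecidableEq α] (A B : List α) (t : ℕ) (i : ℤ) : Set ℤ :=
  {x | max 0 i ≤ x ∧ x ≤ min (A.length : ℤ) ((B.length : ℤ) + i) ∧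
    editDist (A.take x.toNat) (B.take (x - i).toNat) ≤ t}


namespace LevPort

theorem impl_tail {α β δ : Type*} [AddZeroClass δ] [Min δ] (C : Levenshtein.Cost α β δ)
    (x : α) (xs : List α) (y : β)
    (d : {r : List δ // 0 < r.length}) (h : 0 < d.1.tail.length) :
    (Levenshtein.impl C (x::xs) y d).1.tail = (Levenshtein.impl C xs y ⟨d.1.tail, h⟩).1 := by
  obtain ⟨l, w⟩ := d
  rcases l with _ | ⟨d₀, _ | ⟨d₁, ds⟩⟩
  · simp at w
  · simp at h
  · rfl

theorem impl_head {α β δ : Type*} [AddZeroClass δ] [Min δ] (C : Levenshtein.Cost α β δ)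
    (x : α) (xs : List α) (y : β)
    (d : {r : List δ // 0 < r.length}) (h : 0 < d.1.tail.length) :
    (Levenshtein.impl C (x::xs) y d).1[0]'(Levenshtein.impl C (x::xs) y d).2 =
      min (C.delete x + (Levenshtein.impl C xs y ⟨d.1.tail, h⟩).1[0]'
          (Levenshtein.impl C xs y ⟨d.1.tail, h⟩).2)
        (min (C.insert y + d.1[0]'d.2) (C.substitute x y + d.1.tail[0]'h)) := by
  obtain ⟨l, w⟩ := d
  rcases l with _ | ⟨d₀, _ | ⟨d₁, ds⟩⟩
  · simp at w
  · simp at h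
  · rfl

theorem sl_cons_tail {α β δ : Type*} [AddZeroClass δ] [Min δ] (C : Levenshtein.Cost α β δ)
    (x : α) (xs : List α) (ys : List β) :
    (suffixLevenshtein C (x::xs) ys).1.tail = (suffixLevenshtein C xs ys).1 := by
  induction ys with
  | nil => rfl
  | cons y ys ih =>
    have h : 0 < (suffixLevenshtein C (x::xs) ys).1.tail.length := by
      rw [ih]; exact (suffixLevenshtein C xs ys).2
    show (Levenshtein.impl C (x::xs) y (suffixLevenshtein C (x::xs) ys)).1.tail =
      (Levenshtein.impl C xs y (suffixLevenshtein C xs ys)).1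
    rw [impl_tail C x xs y _ h]
    have e : (⟨_, h⟩ : {r : List δ // 0 < r.length}) = suffixLevenshtein C xs ys :=
      Subtype.ext ih
    rw [e]

theorem sl_nil {α β δ : Type*} [AddZeroClass δ] [Min δ] (C : Levenshtein.Cost α β δ)
    (ys : List β) : ∃ a, (suffixLevenshtein C ([] : List α) ys).1 = [a] := by
  induction ys with
  | nil => exact ⟨0, rfl⟩
  | cons y ys ih => exact ⟨_, rfl⟩

end LevPort

@[simp] theorem levenshtein_nil_nil {α β δ : Type*} [AddZeroClass δ] [Min δ]
    (C : Levenshtein.Cost α β δ) : levenshtein C ([] : List α) ([] : List β) = 0 := rfl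

@[simp] theorem levenshtein_cons_nil {α β δ : Type*} [AddZeroClass δ] [Min δ]
    (C : Levenshtein.Cost α β δ) (x : α) (xs : List α) :
    levenshtein C (x :: xs) ([] : List β) = C.delete x + levenshtein C xs [] := rfl

@[simp] theorem levenshtein_nil_cons {α β δ : Type*} [AddZeroClass δ] [Min δ]
    (C : Levenshtein.Cost α β δ) (y : β) (ys : List β) :
    levenshtein C ([] : List α) (y :: ys) = C.insert y + levenshtein C [] ys := by
  obtain ⟨a, ha⟩ := LevPort.sl_nil (α := α) C ys
  have key : ∀ (l : List δ) (h1 : l ≠ []) (h2 : 0 < l.length), l = [a] →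
      l.getLast h1 = l[0]'h2 := by
    rintro _ _ _ rfl; rfl
  show C.insert y + (suffixLevenshtein C ([] : List α) ys).1.getLast _ =
    C.insert y + (suffixLevenshtein C ([] : List α) ys).1[0]'(suffixLevenshtein C [] ys).2
  exact congrArg _ (key _ _ _ ha)

theorem levenshtein_cons_cons {α β δ : Type*} [AddZeroClass δ] [Min δ]
    (C : Levenshtein.Cost α β δ) (x : α) (xs : List α) (y : β) (ys : List β) :
    levenshtein C (x :: xs) (y :: ys) =
      min (C.delete x + levenshtein C xs (y :: ys))
        (min (C.insert y + levenshtein C (x :: xs) ys)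
          (C.substitute x y + levenshtein C xs ys)) := by
  have h : 0 < (suffixLevenshtein C (x::xs) ys).1.tail.length := by
    rw [LevPort.sl_cons_tail]; exact (suffixLevenshtein C xs ys).2
  have e : (⟨_, h⟩ : {r : List δ // 0 < r.length}) = suffixLevenshtein C xs ys :=
    Subtype.ext (LevPort.sl_cons_tail C x xs ys)
  have h2 := LevPort.impl_head C x xs y (suffixLevenshtein C (x::xs) ys) h
  rw [e] at h2
  have key : ∀ (l : List δ) (hl : 0 < l.length), l = (suffixLevenshtein C xs ys).1 →
      l[0]'hl = levenshtein C xs ys := by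
    rintro l hl rfl; rfl
  show (Levenshtein.impl C (x::xs) y (suffixLevenshtein C (x::xs) ys)).1[0]'
    (Levenshtein.impl C (x::xs) y (suffixLevenshtein C (x::xs) ys)).2 = _
  rw [h2, key _ h (LevPort.sl_cons_tail C x xs ys)]
  rfl

set_option linter.unusedSectionVars false
namespace EDAux
variable {α : Type*} [DecidableEq α]

@[simp] theorem ed_nil_right (X : List α) : editDist X [] = X.length := by
  induction X with
  | nil => simp [editDist]
  | cons x X ih => simp [editDist, Levenshtein.defaultCost] at ih ⊢; omega

@[simp] theorem ed_nil_left (Y : List α) : editDist [] Y = Y.length := by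
  induction Y with
  | nil => simp [editDist]
  | cons y Y ih => simp [editDist, Levenshtein.defaultCost] at ih ⊢; omega

theorem ed_cons_cons (x y : α) (X Y : List α) :
    editDist (x :: X) (y :: Y) =
      min (min (editDist X (y :: Y) + 1) (editDist (x :: X) Y + 1))
        (editDist X Y + if x = y then 0 else 1) := by
  simp only [editDist, levenshtein_cons_cons, Levenshtein.defaultCost]
  omega

theorem ed_len (X Y : List α) :
    X.length ≤ editDist X Y + Y.length ∧ Y.length ≤ editDist X Y + X.length := by
  induction X generalizing Y with
  | nil => simp
  | cons x X ihX =>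
    induction Y with
    | nil => simp
    | cons y Y ihY =>
      have h1 := ihX (y :: Y)
      have h2 := ihY
      have h3 := ihX Y
      rw [ed_cons_cons]
      simp only [List.length_cons] at *
      omega

theorem ed_del_right (X Y : List α) (a : α) :
    editDist (X ++ [a]) Y ≤ editDist X Y + 1 := by
  induction X generalizing Y with
  | nil =>
    induction Y with
    | nil => simp
    | cons y Y ihY =>
      rw [List.nil_append, ed_cons_cons]
      simp only [ed_nil_left, List.length_cons] at *
      omega
  | cons x X ihX =>
    induction Y with
    | nil => simp
    | cons y Y ihY =>
      have h1 := ihX (y :: Y)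
      have h2 := ihY
      have h3 := ihX Y
      simp only [List.cons_append] at h1 h2 h3 ⊢
      rw [ed_cons_cons, ed_cons_cons]
      omega

theorem ed_ins_right (X Y : List α) (b : α) :
    editDist X (Y ++ [b]) ≤ editDist X Y + 1 := by
  induction X generalizing Y with
  | nil => simp
  | cons x X ihX =>
    induction Y with
    | nil =>
      have h := ihX []
      rw [List.nil_append, ed_cons_cons]
      simp only [ed_nil_right, ed_nil_left] at *
      omega
    | cons y Y ihY =>
      have h1 := ihX (y :: Y)
      have h2 := ihY
      have h3 := ihX Y
      simp only [List.cons_append] at h1 h2 h3 ⊢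
      rw [ed_cons_cons, ed_cons_cons]
      omega

theorem ed_del_right' (X Y : List α) (a : α) :
    editDist X Y ≤ editDist (X ++ [a]) Y + 1 := by
  induction X generalizing Y with
  | nil =>
    have := (ed_len ([a]) Y).2
    simp only [ed_nil_left, List.nil_append, List.length_cons, List.length_nil] at *
    omega
  | cons x X ihX =>
    induction Y with
    | nil => simp
    | cons y Y ihY =>
      have h1 := ihX (y :: Y)
      have h2 := ihY
      have h3 := ihX Y
      simp only [List.cons_append] at h1 h2 h3 ⊢
      rw [ed_cons_cons, ed_cons_cons]
      omega

theorem ed_ins_right' (X Y : List α) (b : α) :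
    editDist X Y ≤ editDist X (Y ++ [b]) + 1 := by
  induction X generalizing Y with
  | nil => simp; omega
  | cons x X ihX =>
    induction Y with
    | nil =>
      have := (ed_len (x :: X) [b]).1
      simp only [ed_nil_right, List.nil_append, List.length_cons, List.length_nil] at *
      omega
    | cons y Y ihY =>
      have h1 := ihX (y :: Y)
      have h2 := ihY
      have h3 := ihX Y
      simp only [List.cons_append] at h1 h2 h3 ⊢
      rw [ed_cons_cons, ed_cons_cons]
      omega

theorem ed_cons_left (x : α) (X Y : List α) : editDist (x :: X) Y ≤ editDist X Y + 1 := by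
  cases Y with
  | nil => simp
  | cons y Y => rw [ed_cons_cons]; omega

theorem ed_cons_right (y : α) (X Y : List α) : editDist X (y :: Y) ≤ editDist X Y + 1 := by
  cases X with
  | nil => simp
  | cons x X => rw [ed_cons_cons]; omega

theorem ed_cons_cons_le (x y : α) (X Y : List α) :
    editDist (x :: X) (y :: Y) ≤ editDist X Y + (if x = y then 0 else 1) := by
  rw [ed_cons_cons]; omega

theorem ed_slide (X Y : List α) (a : α) :
    editDist (X ++ [a]) (Y ++ [a]) ≤ editDist X Y := by
  induction X generalizing Y with
  | nil =>
    induction Y with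
    | nil => simp [ed_cons_cons]
    | cons y Y ihY =>
      have h := ihY
      simp only [List.cons_append, List.nil_append, ed_nil_left] at h ⊢
      rw [ed_cons_cons]
      simp only [ed_nil_left, List.length_append, List.length_cons, List.length_nil]
      omega
  | cons x X ihX =>
    induction Y with
    | nil =>
      have h := ihX []
      simp only [List.cons_append, List.nil_append, ed_nil_right] at h ⊢
      rw [ed_cons_cons]
      simp only [ed_nil_right, List.length_append, List.length_cons, List.length_nil]
      omega
    | cons y Y ihY =>
      have h1 := ihX (y :: Y)
      have h2 := ihY
      have h3 := ihX Y
      simp only [List.cons_append] at h1 h2 h3 ⊢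
      rw [ed_cons_cons x y (X ++ [a]) (Y ++ [a]), ed_cons_cons x y X Y]
      omega

theorem ed_diag_le (X Y : List α) (a b : α) :
    editDist (X ++ [a]) (Y ++ [b]) ≤ editDist X Y + 1 := by
  induction X generalizing Y with
  | nil =>
    induction Y with
    | nil => simp [ed_cons_cons]; split <;> simp
    | cons y Y ihY =>
      have h := ihY
      simp only [List.cons_append, List.nil_append, ed_nil_left] at h ⊢
      rw [ed_cons_cons]
      simp only [ed_nil_left, List.length_append, List.length_cons, List.length_nil]
      omega
  | cons x X ihX =>
    induction Y with
    | nil =>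
      have h := ihX []
      simp only [List.cons_append, List.nil_append, ed_nil_right] at h ⊢
      rw [ed_cons_cons]
      simp only [ed_nil_right, List.length_append, List.length_cons, List.length_nil]
      omega
    | cons y Y ihY =>
      have h1 := ihX (y :: Y)
      have h2 := ihY
      have h3 := ihX Y
      simp only [List.cons_append] at h1 h2 h3 ⊢
      rw [ed_cons_cons x y (X ++ [a]) (Y ++ [b]), ed_cons_cons x y X Y]
      omega

theorem ed_mono (X Y : List α) (a b : α) :
    editDist X Y ≤ editDist (X ++ [a]) (Y ++ [b]) := by
  induction X generalizing Y with
  | nil =>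
    have := (ed_len ([a]) (Y ++ [b])).2
    simp only [ed_nil_left, List.nil_append, List.length_append, List.length_cons,
      List.length_nil] at *
    omega
  | cons x X ihX =>
    induction Y with
    | nil =>
      have := (ed_len (x :: X ++ [a]) ([b])).1
      simp only [ed_nil_right, List.cons_append, List.nil_append, List.length_append,
        List.length_cons, List.length_nil] at *
      omega
    | cons y Y ihY =>
      have h1 := ihX (y :: Y)
      have h2 := ihY
      have h3 := ihX Y
      simp only [List.cons_append] at h1 h2 h3 ⊢
      rw [ed_cons_cons x y (X ++ [a]) (Y ++ [b]), ed_cons_cons x y X Y]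
      omega

theorem ed_mismatch {a b : α} (hab : a ≠ b) (X Y : List α) :
    min (min (editDist X (Y ++ [b])) (editDist (X ++ [a]) Y)) (editDist X Y) + 1
      ≤ editDist (X ++ [a]) (Y ++ [b]) := by
  induction X generalizing Y with
  | nil =>
    induction Y with
    | nil =>
      simp only [List.nil_append, ed_nil_left, ed_nil_right, List.length_cons, List.length_nil]
      rw [ed_cons_cons]
      simp [hab]
    | cons y Y ihY =>
      have h := ihY
      have hb1 := ed_cons_cons_le a y ([] : List α) Y
      have hb2 := ed_cons_right y ([a] : List α) Y
      simp only [List.cons_append, List.nil_append, ed_nil_left, List.length_append,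
        List.length_cons, List.length_nil] at h hb1 hb2 ⊢
      rw [ed_cons_cons a y ([] : List α) (Y ++ [b])]
      simp only [ed_nil_left, List.length_append, List.length_cons, List.length_nil]
      generalize (if a = y then (0:ℕ) else 1) = cay at hb1 ⊢
      omega
  | cons x X ihX =>
    induction Y with
    | nil =>
      have h := ihX []
      have hb1 := ed_cons_cons_le x b X ([] : List α)
      have hb2 := ed_cons_left x X ([b] : List α)
      simp only [List.cons_append, List.nil_append, ed_nil_right, List.length_append,
        List.length_cons, List.length_nil] at h hb1 hb2 ⊢
      rw [ed_cons_cons x b (X ++ [a]) ([] : List α)]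
      simp only [ed_nil_right, List.length_append, List.length_cons, List.length_nil]
      generalize (if x = b then (0:ℕ) else 1) = cxb at hb1 ⊢
      omega
    | cons y Y ihY =>
      have h1 := ihX (y :: Y)
      have h2 := ihY
      have h3 := ihX Y
      -- bridges for the left-hand min components
      have b1 := ed_cons_left x X (y :: Y ++ [b])
      have b2 := ed_cons_cons_le x y X (Y ++ [b])
      have b3 := ed_cons_left x (X ++ [a]) (y :: Y)
      have b4 := ed_cons_cons_le x y (X ++ [a]) Y
      have b5 := ed_cons_left x X (y :: Y)
      have b6 := ed_cons_cons_le x y X Y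
      have b7 := ed_cons_right y (x :: X) (Y ++ [b])
      have b8 := ed_cons_right y (x :: X ++ [a]) Y
      have b9 := ed_cons_right y (x :: X) Y
      simp only [List.cons_append] at h1 h2 h3 b1 b2 b3 b4 b5 b6 b7 b8 b9 ⊢
      rw [ed_cons_cons x y (X ++ [a]) (Y ++ [b])]
      generalize (if x = y then (0:ℕ) else 1) = cxy at *
      omega

theorem take_succ_of_lt (A : List α) (x : ℕ) (hx : x < A.length) :
    A.take (x+1) = A.take x ++ [A[x]] := by
  rw [List.take_succ, List.getElem?_eq_getElem hx]
  rfl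

theorem take_succ_of_le (A : List α) (x : ℕ) (hx : A.length ≤ x) :
    A.take (x+1) = A.take x := by
  rw [List.take_of_length_le hx, List.take_of_length_le (le_trans hx (Nat.le_succ x))]

variable (A B : List α)

theorem ed_take_del (x y : ℕ) :
    editDist (A.take (x+1)) (B.take y) ≤ editDist (A.take x) (B.take y) + 1 := by
  rcases lt_or_ge x A.length with h | h
  · rw [take_succ_of_lt A x h]; exact ed_del_right _ _ _
  · rw [take_succ_of_le A x h]; omega

theorem ed_take_ins (x y : ℕ) :
    editDist (A.take x) (B.take (y+1)) ≤ editDist (A.take x) (B.take y) + 1 := by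
  rcases lt_or_ge y B.length with h | h
  · rw [take_succ_of_lt B y h]; exact ed_ins_right _ _ _
  · rw [take_succ_of_le B y h]; omega

theorem ed_take_diag (x y : ℕ) :
    editDist (A.take (x+1)) (B.take (y+1)) ≤ editDist (A.take x) (B.take y) + 1 := by
  rcases lt_or_ge x A.length with h | h
  · rcases lt_or_ge y B.length with h' | h'
    · rw [take_succ_of_lt A x h, take_succ_of_lt B y h']; exact ed_diag_le _ _ _ _
    · rw [take_succ_of_le B y h']; exact ed_take_del A B x y
  · rw [take_succ_of_le A x h]; exact ed_take_ins A B x y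

theorem ed_take_del' (x y : ℕ) :
    editDist (A.take x) (B.take y) ≤ editDist (A.take (x+1)) (B.take y) + 1 := by
  rcases lt_or_ge x A.length with h | h
  · rw [take_succ_of_lt A x h]; exact ed_del_right' _ _ _
  · rw [take_succ_of_le A x h]; omega

theorem ed_take_ins' (x y : ℕ) :
    editDist (A.take x) (B.take y) ≤ editDist (A.take x) (B.take (y+1)) + 1 := by
  rcases lt_or_ge y B.length with h | h
  · rw [take_succ_of_lt B y h]; exact ed_ins_right' _ _ _
  · rw [take_succ_of_le B y h]; omega

theorem ed_take_mono (x y : ℕ) (hx : x < A.length) (hy : y < B.length) :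
    editDist (A.take x) (B.take y) ≤ editDist (A.take (x+1)) (B.take (y+1)) := by
  rw [take_succ_of_lt A x hx, take_succ_of_lt B y hy]; exact ed_mono _ _ _ _

theorem ed_take_mismatch (x y : ℕ) (hx : x < A.length) (hy : y < B.length)
    (hne : A[x] ≠ B[y]) :
    min (min (editDist (A.take x) (B.take (y+1))) (editDist (A.take (x+1)) (B.take y)))
      (editDist (A.take x) (B.take y)) + 1 ≤ editDist (A.take (x+1)) (B.take (y+1)) := by
  rw [take_succ_of_lt A x hx, take_succ_of_lt B y hy]
  exact ed_mismatch hne (A.take x) (B.take y)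

theorem ed_take_len (x y : ℕ) (hx : x ≤ A.length) (hy : y ≤ B.length) :
    x ≤ editDist (A.take x) (B.take y) + y ∧ y ≤ editDist (A.take x) (B.take y) + x := by
  have := ed_len (A.take x) (B.take y)
  rw [List.length_take, List.length_take] at this
  omega

theorem lcp_le_left (X Y : List α) : lcp X Y ≤ X.length :=
  le_trans (Nat.findGreatest_le _) (min_le_left _ _)

theorem lcp_le_right (X Y : List α) : lcp X Y ≤ Y.length :=
  le_trans (Nat.findGreatest_le _) (min_le_right _ _)

theorem lcp_take (X Y : List α) : X.take (lcp X Y) = Y.take (lcp X Y) :=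
  Nat.findGreatest_spec (P := fun l => X.take l = Y.take l) (Nat.zero_le _) (by simp)

theorem le_lcp (X Y : List α) (k : ℕ) (hk1 : k ≤ X.length) (hk2 : k ≤ Y.length)
    (h : X.take k = Y.take k) : k ≤ lcp X Y :=
  Nat.le_findGreatest (le_min hk1 hk2) h

theorem ed_take_lcp (x y k : ℕ) (hk : k ≤ lcp (A.drop x) (B.drop y)) :
    editDist (A.take (x+k)) (B.take (y+k)) ≤ editDist (A.take x) (B.take y) := by
  induction k with
  | zero => simp
  | succ k ih =>
    have hxk : x + k < A.length := by
      have := le_trans hk (lcp_le_left (A.drop x) (B.drop y))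
      rw [List.length_drop] at this
      omega
    have hyk : y + k < B.length := by
      have := le_trans hk (lcp_le_right (A.drop x) (B.drop y))
      rw [List.length_drop] at this
      omega
    have hchar : A[x+k] = B[y+k] := by
      have ht := lcp_take (A.drop x) (B.drop y)
      have h1 : ((A.drop x).take (lcp (A.drop x) (B.drop y)))[k]'(by
          rw [List.length_take, List.length_drop]; omega) =
        ((B.drop y).take (lcp (A.drop x) (B.drop y)))[k]'(by
          rw [List.length_take, List.length_drop]; omega) := by
        congr 1
      rw [List.getElem_take, List.getElem_take, List.getElem_drop, List.getElem_drop] at h1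
      exact h1
    calc editDist (A.take (x+(k+1))) (B.take (y+(k+1)))
        ≤ editDist (A.take (x+k)) (B.take (y+k)) := by
          rw [show x+(k+1) = (x+k)+1 by omega, show y+(k+1) = (y+k)+1 by omega,
            take_succ_of_lt A _ hxk, take_succ_of_lt B _ hyk, hchar]
          exact ed_slide _ _ _
      _ ≤ _ := ih (le_trans (Nat.le_succ k) hk)

end EDAux


set_option maxHeartbeats 2000000 in
/-- Correctness of the Landau–Vishkin frontier recurrence: given the frontiers
`f(t-1, i+1) = c₁`, `f(t-1, i-1) = c₂ - 1` and `f(t-1, i) = c₃ - 1` on the applicable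
neighboring diagonals, at least one candidate is applicable, and letting `gmax` be the maximum
of the applicable candidates and `g = min(min(n, m+i), gmax)`, the set `S_t(i)` is nonempty with
maximum `f(t, i) = g + lcp(A.drop g, B.drop (g - i))`. -/
theorem landau_vishkin_step {α : Type*} [DecidableEq α] (A B : List α) (t : ℕ) (ht : 1 ≤ t)
    (i : ℤ) (hit : |i| ≤ (t : ℤ)) (him : -(B.length : ℤ) ≤ i) (hin : i ≤ (A.length : ℤ))
    (c₁ c₂ c₃ : ℤ)
    (h₁ : |i + 1| ≤ (t : ℤ) - 1 → i + 1 ≤ (A.length : ℤ) →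
      IsGreatest (diagSet A B (t - 1) (i + 1)) c₁)
    (h₂ : |i - 1| ≤ (t : ℤ) - 1 → -(B.length : ℤ) ≤ i - 1 →
      IsGreatest (diagSet A B (t - 1) (i - 1)) (c₂ - 1))
    (h₃ : |i| ≤ (t : ℤ) - 1 → IsGreatest (diagSet A B (t - 1) i) (c₃ - 1)) :
    ((|i + 1| ≤ (t : ℤ) - 1 ∧ i + 1 ≤ (A.length : ℤ)) ∨
     (|i - 1| ≤ (t : ℤ) - 1 ∧ -(B.length : ℤ) ≤ i - 1) ∨
     |i| ≤ (t : ℤ) - 1) ∧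
    ∀ gmax : ℤ,
      IsGreatest {c : ℤ |
        ((|i + 1| ≤ (t : ℤ) - 1 ∧ i + 1 ≤ (A.length : ℤ)) ∧ c = c₁) ∨
        ((|i - 1| ≤ (t : ℤ) - 1 ∧ -(B.length : ℤ) ≤ i - 1) ∧ c = c₂) ∨
        (|i| ≤ (t : ℤ) - 1 ∧ c = c₃)} gmax →
      letI g : ℤ := min (min (A.length : ℤ) ((B.length : ℤ) + i)) gmax
      IsGreatest (diagSet A B t i)
        (g + (lcp (A.drop g.toNat) (B.drop (g - i).toNat) : ℤ)) := by
  have habs := abs_le.mp hit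
  constructor
  · by_cases hc : |i| ≤ (t:ℤ) - 1
    · exact Or.inr (Or.inr hc)
    · rcases abs_cases i with ⟨he, hs⟩ | ⟨he, hs⟩
      · rw [he] at hc
        exact Or.inr (Or.inl ⟨by rw [abs_le]; omega, by omega⟩)
      · rw [he] at hc
        exact Or.inl ⟨by rw [abs_le]; omega, by omega⟩
  · intro gmax hgmax
    obtain ⟨hgmem, hgub⟩ := hgmax
    simp only [Set.mem_setOf_eq] at hgmem
    set g : ℤ := min (min (A.length : ℤ) ((B.length : ℤ) + i)) gmax with hgdef
    -- key facts about g
    have key : max 0 i ≤ g ∧ editDist (A.take g.toNat) (B.take (g-i).toNat) ≤ t := by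
      rcases hgmem with ⟨⟨ha, hb⟩, hceq⟩ | ⟨⟨ha, hb⟩, hceq⟩ | ⟨ha, hceq⟩
      · -- gmax = c₁
        obtain ⟨hm1, hm2, hm3⟩ := (h₁ ha hb).1
        refine ⟨by omega, ?_⟩
        by_cases hsub : c₁ ≤ min (A.length:ℤ) ((B.length:ℤ)+i)
        · have hgc : g = c₁ := by omega
          have e1 : g.toNat = c₁.toNat := by rw [hgc]
          have e2 : (g - i).toNat = (c₁ - (i+1)).toNat + 1 := by omega
          rw [e1, e2]
          have := EDAux.ed_take_ins A B c₁.toNat (c₁-(i+1)).toNat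
          omega
        · have hg2 : g = (B.length:ℤ) + i := by omega
          have e1 : c₁.toNat = g.toNat + 1 := by omega
          have e2 : (c₁ - (i+1)).toNat = (g - i).toNat := by omega
          rw [e1, e2] at hm3
          have := EDAux.ed_take_del' A B g.toNat (g-i).toNat
          omega
      · -- gmax = c₂
        obtain ⟨hm1, hm2, hm3⟩ := (h₂ ha hb).1
        refine ⟨by omega, ?_⟩
        by_cases hsub : c₂ ≤ min (A.length:ℤ) ((B.length:ℤ)+i)
        · have hgc : g = c₂ := by omega
          have e1 : g.toNat = (c₂-1).toNat + 1 := by omega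
          have e2 : (g - i).toNat = (c₂-1-(i-1)).toNat := by omega
          rw [e1, e2]
          have := EDAux.ed_take_del A B (c₂-1).toNat (c₂-1-(i-1)).toNat
          omega
        · have hg2 : g = (A.length:ℤ) := by omega
          have e1 : (c₂-1).toNat = g.toNat := by omega
          have e2 : (c₂-1-(i-1)).toNat = (g-i).toNat + 1 := by omega
          rw [e1, e2] at hm3
          have := EDAux.ed_take_ins' A B g.toNat (g-i).toNat
          omega
      · -- gmax = c₃
        obtain ⟨hm1, hm2, hm3⟩ := (h₃ ha).1
        refine ⟨by omega, ?_⟩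
        by_cases hsub : c₃ ≤ min (A.length:ℤ) ((B.length:ℤ)+i)
        · have hgc : g = c₃ := by omega
          have e1 : g.toNat = (c₃-1).toNat + 1 := by omega
          have e2 : (g - i).toNat = (c₃-1-i).toNat + 1 := by omega
          rw [e1, e2]
          have := EDAux.ed_take_diag A B (c₃-1).toNat (c₃-1-i).toNat
          omega
        · have hgc : g = c₃ - 1 := by omega
          have e1 : g.toNat = (c₃-1).toNat := by rw [hgc]
          have e2 : (g - i).toNat = (c₃-1-i).toNat := by omega
          rw [e1, e2]
          omega
    obtain ⟨hg0, hgd⟩ := key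
    have hgcap : g ≤ min (A.length : ℤ) ((B.length : ℤ) + i) := min_le_left _ _
    set u := g.toNat with hudef
    set v := (g-i).toNat with hvdef
    have huz : (u:ℤ) = g := by omega
    have hvz : (v:ℤ) = g - i := by omega
    set l := lcp (A.drop u) (B.drop v) with hldef
    have hlA : l + u ≤ A.length := by
      have := EDAux.lcp_le_left (A.drop u) (B.drop v)
      rw [List.length_drop] at this
      have huA : u ≤ A.length := by omega
      omega
    have hlB : l + v ≤ B.length := by
      have := EDAux.lcp_le_right (A.drop u) (B.drop v)
      rw [List.length_drop] at this
      have hvB : v ≤ B.length := by omega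
      omega
    have hGmem : g + (l:ℤ) ∈ diagSet A B t i := by
      refine ⟨by omega, by omega, ?_⟩
      have e1 : (g + (l:ℤ)).toNat = u + l := by omega
      have e2 : (g + (l:ℤ) - i).toNat = v + l := by omega
      rw [e1, e2]
      exact le_trans (EDAux.ed_take_lcp A B u v l (le_of_eq hldef)) hgd
    -- the walk-back claim
    have claim : ∀ k : ℕ, (g + (k:ℤ)) ∈ diagSet A B t i →
        (A.drop u).take k = (B.drop v).take k := by
      intro k
      induction k with
      | zero => intro _; rfl
      | succ k ih =>
        intro hmem
        obtain ⟨hq1, hq2, hq3⟩ := hmem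
        push_cast at hq2 hq3
        have hukA : u + k < A.length := by omega
        have hvkB : v + k < B.length := by omega
        have e1 : (g + ((k:ℤ)+1)).toNat = u + k + 1 := by omega
        have e2 : (g + ((k:ℤ)+1) - i).toNat = v + k + 1 := by omega
        rw [e1, e2] at hq3
        by_cases hch : A[u+k] = B[v+k]
        · have hmem' : (g + (k:ℤ)) ∈ diagSet A B t i := by
            refine ⟨by omega, by omega, ?_⟩
            have e3 : (g + (k:ℤ)).toNat = u + k := by omega
            have e4 : (g + (k:ℤ) - i).toNat = v + k := by omega
            rw [e3, e4]
            exact le_trans (EDAux.ed_take_mono A B (u+k) (v+k) hukA hvkB) hq3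
          have ihh := ih hmem'
          have hdA : k < (A.drop u).length := by rw [List.length_drop]; omega
          have hdB : k < (B.drop v).length := by rw [List.length_drop]; omega
          rw [EDAux.take_succ_of_lt _ k hdA, EDAux.take_succ_of_lt _ k hdB, ihh]
          congr 1
          rw [List.getElem_drop, List.getElem_drop]
          simp only [hch]
        · exfalso
          have hmm := EDAux.ed_take_mismatch A B (u+k) (v+k) hukA hvkB hch
          have h3way : editDist (A.take (u+k)) (B.take (v+k+1)) ≤ t-1 ∨
              editDist (A.take (u+k+1)) (B.take (v+k)) ≤ t-1 ∨
              editDist (A.take (u+k)) (B.take (v+k)) ≤ t-1 := by omega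
          have hgmaxeq : gmax = g := by omega
          rcases h3way with hcase | hcase | hcase
          · -- insert branch : diagonal i-1 at point g+k
            have hlen := EDAux.ed_take_len A B (u+k) (v+k+1) (by omega) (by omega)
            have happ1 : |i-1| ≤ (t:ℤ)-1 := by rw [abs_le]; omega
            have happ2 : -(B.length:ℤ) ≤ i - 1 := by omega
            obtain ⟨-, hub2⟩ := h₂ happ1 happ2
            have hpt : (g + (k:ℤ)) ∈ diagSet A B (t-1) (i-1) := by
              refine ⟨by omega, by omega, ?_⟩
              have e3 : (g + (k:ℤ)).toNat = u + k := by omega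
              have e4 : (g + (k:ℤ) - (i-1)).toNat = v + k + 1 := by omega
              rw [e3, e4]; exact hcase
            have hle := hub2 hpt
            have hc2 := hgub (Or.inr (Or.inl ⟨⟨happ1, happ2⟩, rfl⟩))
            omega
          · -- delete branch : diagonal i+1 at point g+k+1
            have hlen := EDAux.ed_take_len A B (u+k+1) (v+k) (by omega) (by omega)
            have happ1 : |i+1| ≤ (t:ℤ)-1 := by rw [abs_le]; omega
            have happ2 : i + 1 ≤ (A.length:ℤ) := by omega
            obtain ⟨-, hub1⟩ := h₁ happ1 happ2
            have hpt : (g + (k:ℤ) + 1) ∈ diagSet A B (t-1) (i+1) := by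
              refine ⟨by omega, by omega, ?_⟩
              have e3 : (g + (k:ℤ) + 1).toNat = u + k + 1 := by omega
              have e4 : (g + (k:ℤ) + 1 - (i+1)).toNat = v + k := by omega
              rw [e3, e4]; exact hcase
            have hle := hub1 hpt
            have hc1 := hgub (Or.inl ⟨⟨happ1, happ2⟩, rfl⟩)
            omega
          · -- substitute branch : diagonal i at point g+k
            have hlen := EDAux.ed_take_len A B (u+k) (v+k) (by omega) (by omega)
            have happ1 : |i| ≤ (t:ℤ)-1 := by rw [abs_le]; omega
            obtain ⟨-, hub3⟩ := h₃ happ1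
            have hpt : (g + (k:ℤ)) ∈ diagSet A B (t-1) i := by
              refine ⟨by omega, by omega, ?_⟩
              have e3 : (g + (k:ℤ)).toNat = u + k := by omega
              have e4 : (g + (k:ℤ) - i).toNat = v + k := by omega
              rw [e3, e4]; exact hcase
            have hle := hub3 hpt
            have hc3 := hgub (Or.inr (Or.inr ⟨happ1, rfl⟩))
            omega
    refine ⟨hGmem, ?_⟩
    intro x hx
    obtain ⟨hx1, hx2, hx3⟩ := hx
    rcases le_or_gt x g with hxg | hxg
    · omega
    · have hk : x = g + ((x - g).toNat : ℤ) := by omega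
      have hcl := claim (x-g).toNat (by rw [← hk]; exact ⟨hx1, hx2, hx3⟩)
      have hkA : (x-g).toNat ≤ (A.drop u).length := by rw [List.length_drop]; omega
      have hkB : (x-g).toNat ≤ (B.drop v).length := by rw [List.length_drop]; omega
      have := EDAux.le_lcp _ _ _ hkA hkB hcl
      omega
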